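/- Let T be a finite abelian p-group for a prime p ≡ 3 mod 4, and ψ : T → ℚ/ℤ a quadratic 2-linear function. Then ψ ⊥ ψ is isometric to (−ψ) ⊥ (−ψ) on T ⊕ T. -/

import Mathlib

lemma step_lift (p : ℕ) (hp : p.Prime) (hodd : p % 2 = 1) (k : ℕ) (hk : 1 ≤ k)
    (a b : ℤ) (h : (p:ℤ)^k ∣ a^2 + b^2 + 1) (hpa : ¬ (p:ℤ) ∣ a) :
    ∃ a' : ℤ, (p:ℤ)^(k+1) ∣ a'^2 + b^2 + 1 := by
  haveI : Fact p.Prime := ⟨hp⟩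
  obtain ⟨c, hc⟩ := h
  set u : ZMod p := 2 * (a : ZMod p) with hu
  have hu0 : u ≠ 0 := by
    have h2 : (2 : ZMod p) ≠ 0 := by
      have hnd : ¬ p ∣ 2 := by
        intro hd
        have := (Nat.prime_dvd_prime_iff_eq hp Nat.prime_two).mp hd
        omega
      intro h20
      apply hnd
      rw [← ZMod.natCast_eq_zero_iff]
      exact_mod_cast h20
    have ha : ((a : ZMod p)) ≠ 0 := by
      simpa [ZMod.intCast_zmod_eq_zero_iff_dvd] using hpa
    exact mul_ne_zero h2 ha
  set t : ℤ := ((((-c : ZMod p)) * u⁻¹).val : ℤ) with ht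
  have htc : ((t : ZMod p)) = (-c : ZMod p) * u⁻¹ := by
    push_cast [ht, ZMod.natCast_val, ZMod.cast_id]; ring
  have hdvd : (p:ℤ) ∣ 2 * a * t + c := by
    rw [← ZMod.intCast_zmod_eq_zero_iff_dvd]
    push_cast
    rw [htc, hu]
    have hinv : (2 * (a:ZMod p)) * (2 * (a:ZMod p))⁻¹ = 1 :=
      mul_inv_cancel₀ (by rw [← hu]; exact hu0)
    linear_combination (-(c:ZMod p)) * hinv
  obtain ⟨s, hs⟩ := hdvd
  refine ⟨a + t * (p:ℤ)^k, ⟨s + t^2 * (p:ℤ)^(k-1), ?_⟩⟩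
  have h2k : (p:ℤ)^k * (p:ℤ)^k = (p:ℤ)^(k+1) * (p:ℤ)^(k-1) := by
    rw [← pow_add, ← pow_add]; congr 1; omega
  have hexp : (a + t * (p:ℤ)^k)^2 + b^2 + 1
      = (p:ℤ)^k * (2*a*t + c) + t^2 * ((p:ℤ)^k * (p:ℤ)^k) := by
    linear_combination hc
  rw [hexp, h2k, hs]
  ring

lemma sq_add_sq_mod (p : ℕ) (hp : p.Prime) (hodd : p % 2 = 1) :
    ∀ k : ℕ, ∃ a b : ℤ, (p:ℤ)^k ∣ a^2 + b^2 + 1 := by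
  haveI : Fact p.Prime := ⟨hp⟩
  intro k
  induction k with
  | zero => exact ⟨0, 0, by norm_num⟩
  | succ k ih =>
    rcases Nat.eq_zero_or_pos k with rfl | hk
    · obtain ⟨u, v, huv⟩ := ZMod.sq_add_sq p (-1)
      refine ⟨(u.val : ℤ), (v.val : ℤ), ?_⟩
      rw [pow_one, ← ZMod.intCast_zmod_eq_zero_iff_dvd]
      push_cast [ZMod.natCast_val, ZMod.cast_id]
      rw [huv]; ring
    · obtain ⟨a, b, hab⟩ := ih
      have hor : ¬ (p:ℤ) ∣ a ∨ ¬ (p:ℤ) ∣ b := by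
        by_contra hcon
        push_neg at hcon
        obtain ⟨ha, hb⟩ := hcon
        have hpp : (p:ℤ) ∣ a^2 + b^2 + 1 :=
          dvd_trans (dvd_pow_self (p:ℤ) (by omega : k ≠ 0)) hab
        have h1 : (p:ℤ) ∣ a^2 + b^2 :=
          dvd_add (by rw [sq]; exact ha.mul_right a) (by rw [sq]; exact hb.mul_right b)
        have hone : (p:ℤ) ∣ 1 := by
          have := dvd_sub hpp h1
          simpa using this
        have := Int.le_of_dvd one_pos hone
        have := hp.two_le
        omega
      rcases hor with hpa | hpb
      · obtain ⟨a', ha'⟩ := step_lift p hp hodd k hk a b hab hpa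
        exact ⟨a', b, ha'⟩
      · rw [show a^2+b^2+1 = b^2+a^2+1 from by ring] at hab
        obtain ⟨b', hb'⟩ := step_lift p hp hodd k hk b a hab hpb
        exact ⟨b', a, hb'⟩


def bform {T M : Type*} [AddCommGroup T] [AddCommGroup M] (ψ : T → M) (x y : T) : M :=
  ψ (x + y) - ψ x - ψ y

def IsTwoLinear {T M : Type*} [AddCommGroup T] [AddCommGroup M] (ψ : T → M) : Prop :=
  ∀ x y z : T, bform ψ (x + y) z = bform ψ x z + bform ψ y z

def IsQuadratic {T : Type*} [AddCommGroup T] (ψ : T → AddCircle (1 : ℚ)) : Prop :=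
  ∀ (a : ℤ) (x : T), ψ (a • x) = (a ^ 2) • ψ x

/-- If `T` is a finite abelian `p`-group with `p ≡ 3 mod 4` prime and `ψ` is a
quadratic 2-linear function, then `ψ ⊥ ψ ≅ (-ψ) ⊥ (-ψ)` on `T ⊕ T`. -/
theorem quadratic_double_iso_neg_of_three_mod_four {T : Type*} [AddCommGroup T]
    [Finite T] (p : ℕ) (hp : p.Prime) (hp4 : p % 4 = 3)
    (hT : ∀ x : T, ∃ n : ℕ, p ^ n • x = 0)
    (ψ : T → AddCircle (1 : ℚ)) (h2 : IsTwoLinear ψ) (hq : IsQuadratic ψ) :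
    ∃ h : T × T ≃+ T × T,
      ∀ z : T × T, -ψ (h z).1 + -ψ (h z).2 = ψ z.1 + ψ z.2 := by
  classical
  cases nonempty_fintype T
  -- uniform exponent
  set N : ℕ := Finset.univ.sup (fun x : T => Nat.find (hT x)) with hNdef
  have hN : ∀ x : T, (p:ℤ)^N • x = 0 := by
    intro x
    have h1 : p ^ (Nat.find (hT x)) • x = 0 := Nat.find_spec (hT x)
    have hle : Nat.find (hT x) ≤ N := Finset.le_sup (f := fun x : T => Nat.find (hT x)) (Finset.mem_univ x)
    have : (p:ℤ)^N • x = (p:ℤ)^(N - Nat.find (hT x)) • ((p:ℤ)^(Nat.find (hT x)) • x) := by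
      rw [smul_smul, ← pow_add]
      congr 2
      omega
    rw [this]
    have : (p:ℤ)^(Nat.find (hT x)) • x = 0 := by
      have := h1
      rw [show ((p:ℤ)^(Nat.find (hT x))) = ((p^(Nat.find (hT x)) : ℕ) : ℤ) by push_cast; ring,
        natCast_zsmul, this]
    rw [this, smul_zero]
  obtain ⟨a, b, c, hc⟩ := sq_add_sq_mod p hp (by omega) N
  -- key smul facts
  have key : ∀ x : T, (a^2 + b^2) • x = -x := by
    intro x
    have h0 : (a^2 + b^2 + 1) • x = 0 := by
      rw [hc, mul_smul, smul_comm]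
      · rw [hN x, smul_zero]
    rw [add_smul, one_smul] at h0
    exact eq_neg_of_add_eq_zero_left h0
  -- basic facts about ψ and bform
  have hψ0 : ψ 0 = 0 := by
    have := hq 0 0
    simpa using this
  have hB0 : ∀ z : T, bform ψ 0 z = 0 := by
    intro z
    have := h2 0 0 z
    simpa using this.symm
  have hBhom : ∀ z : T, ∃ f : T →+ AddCircle (1:ℚ), ∀ x, f x = bform ψ x z := by
    intro z
    exact ⟨AddMonoidHom.mk' (fun x => bform ψ x z) (fun u v => h2 u v z), fun x => rfl⟩
  have hBlin : ∀ (n : ℤ) (x z : T), bform ψ (n • x) z = n • bform ψ x z := by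
    intro n x z
    obtain ⟨f, hf⟩ := hBhom z
    rw [← hf, ← hf, map_zsmul]
  have hBsymm : ∀ x y : T, bform ψ x y = bform ψ y x := by
    intro x y
    simp only [bform, add_comm x y]
    abel
  have hexpand : ∀ u v : T, ψ (u + v) = ψ u + ψ v + bform ψ u v := by
    intro u v
    simp only [bform]
    abel
  -- p^N kills ψ values
  have hpψ : ∀ x : T, (p:ℤ)^N • ψ x = 0 := by
    intro x
    have hBxx : bform ψ x x = (2:ℤ) • ψ x := by
      have h4 : ψ (x + x) = (4:ℤ) • ψ x := by
        have := hq 2 x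
        rw [two_smul] at this
        rw [this]
        norm_num
      simp [bform, h4]
      rw [show ((4:ℤ) • ψ x = (2:ℤ) • ψ x + (2:ℤ) • ψ x) from by rw [← add_smul]; norm_num]
      abel
    have h2pN : ((2:ℤ) * (p:ℤ)^N) • ψ x = 0 := by
      have := hBlin ((p:ℤ)^N) x x
      rw [hN x, hB0, hBxx, smul_smul] at this
      rw [mul_comm]
      exact this.symm
    have hp2N : ((p:ℤ)^N * (p:ℤ)^N) • ψ x = 0 := by
      have := hq ((p:ℤ)^N) x
      rw [hN x, hψ0] at this
      rw [← sq]
      exact this.symm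
    have hco : IsCoprime (2:ℤ) ((p:ℤ)^N) := by
      have : IsCoprime (2:ℤ) (p:ℤ) := by
        rw [show ((2:ℤ) = ((2:ℕ):ℤ)) from by norm_num, Int.isCoprime_iff_gcd_eq_one,
          Int.gcd_natCast_natCast]
        exact Nat.coprime_two_left.mpr (Nat.odd_iff.mpr (by omega))
      exact this.pow_right
    obtain ⟨u, v, huv⟩ := hco
    calc (p:ℤ)^N • ψ x
        = (u * (2 * (p:ℤ)^N) + v * ((p:ℤ)^N * (p:ℤ)^N)) • ψ x := by
          rw [show (u * (2 * (p:ℤ)^N) + v * ((p:ℤ)^N * (p:ℤ)^N))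
              = (u*2 + v*(p:ℤ)^N) * (p:ℤ)^N from by ring, huv, one_mul]
      _ = u • ((2 * (p:ℤ)^N) • ψ x) + v • (((p:ℤ)^N * (p:ℤ)^N) • ψ x) := by
          simp only [add_smul, mul_smul]
      _ = 0 := by rw [h2pN, hp2N, smul_zero, smul_zero, add_zero]
  have keyψ : ∀ x : T, (a^2 + b^2) • ψ x = -ψ x := by
    intro x
    have h0 : (a^2 + b^2 + 1) • ψ x = 0 := by
      rw [hc, mul_comm, mul_smul, hpψ x, smul_zero]
    rw [add_smul, one_smul] at h0
    exact eq_neg_of_add_eq_zero_left h0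
  -- the isometry
  refine ⟨{
    toFun := fun z => (a • z.1 + b • z.2, (-b) • z.1 + a • z.2)
    invFun := fun z => ((-a) • z.1 + b • z.2, (-b) • z.1 + (-a) • z.2)
    left_inv := ?_
    right_inv := ?_
    map_add' := ?_ }, ?_⟩
  · rintro ⟨x, y⟩
    refine Prod.ext ?_ ?_ <;> simp only
    · have e1 : (-a) • (a • x + b • y) + b • ((-b) • x + a • y) = (-(a^2+b^2)) • x := by
        module
      rw [e1, neg_smul, key, neg_neg]
    · have e2 : (-b) • (a • x + b • y) + (-a) • ((-b) • x + a • y) = (-(a^2+b^2)) • y := by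
        module
      rw [e2, neg_smul, key, neg_neg]
  · rintro ⟨x, y⟩
    refine Prod.ext ?_ ?_ <;> simp only
    · have e1 : a • ((-a) • x + b • y) + b • ((-b) • x + (-a) • y) = (-(a^2+b^2)) • x := by
        module
      rw [e1, neg_smul, key, neg_neg]
    · have e2 : (-b) • ((-a) • x + b • y) + a • ((-b) • x + (-a) • y) = (-(a^2+b^2)) • y := by
        module
      rw [e2, neg_smul, key, neg_neg]
  · rintro ⟨x, y⟩ ⟨x', y'⟩
    refine Prod.ext ?_ ?_ <;> simp only [Prod.fst_add, Prod.snd_add, smul_add] <;> abel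
  · rintro ⟨x, y⟩
    simp only [AddEquiv.coe_mk, Equiv.coe_fn_mk]
    have hxy1 : ψ (a • x + b • y) = (a^2) • ψ x + (b^2) • ψ y + (a*b) • bform ψ x y := by
      rw [hexpand, hq a x, hq b y, hBlin a x (b • y), hBsymm x (b • y), hBlin b y x,
        hBsymm y x, smul_smul]
    have hxy2 : ψ ((-b) • x + a • y) = (b^2) • ψ x + (a^2) • ψ y + (-(a*b)) • bform ψ x y := by
      rw [hexpand, hq (-b) x, hq a y, hBlin (-b) x (a • y), hBsymm x (a • y), hBlin a y x,
        hBsymm y x, smul_smul]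
      rw [show ((-b)^2 : ℤ) = b^2 from by ring, show ((-b) * a : ℤ) = -(a*b) from by ring]
    rw [hxy1, hxy2]
    have hsum : -((a^2) • ψ x + (b^2) • ψ y + (a*b) • bform ψ x y)
        + -((b^2) • ψ x + (a^2) • ψ y + (-(a*b)) • bform ψ x y)
        = -((a^2 + b^2) • ψ x) + -((a^2 + b^2) • ψ y) := by
      rw [add_smul, add_smul, neg_smul]
      abel
    rw [hsum, keyψ, keyψ, neg_neg, neg_neg]
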